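/- Let D ⊊ ℝⁿ be a bounded domain with diameter d. For all x, y ∈ D: ζ_D(x,y) ≤ m_D(x,y), where ζ_D(x,y) = log(1 + d·|x−y| / min(η(x), η(y))) and m_D is the infimal path-length metric with density d/η(z). -/

import Mathlib

open Set Metric MeasureTheory intervalIntegral

noncomputable def deltaD {n : ℕ} (D : Set (EuclideanSpace ℝ (Fin n)))
    (z : EuclideanSpace ℝ (Fin n)) : ℝ :=
  Metric.infDist z (frontier D)

noncomputable def etaD {n : ℕ} (D : Set (EuclideanSpace ℝ (Fin n)))
    (z : EuclideanSpace ℝ (Fin n)) : ℝ :=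
  deltaD D z * (Metric.diam D - deltaD D z)

noncomputable def zetaD {n : ℕ} (D : Set (EuclideanSpace ℝ (Fin n)))
    (x y : EuclideanSpace ℝ (Fin n)) : ℝ :=
  Real.log (1 + Metric.diam D * dist x y / min (etaD D x) (etaD D y))

noncomputable def zetaD' {n : ℕ} (D : Set (EuclideanSpace ℝ (Fin n)))
    (x y : EuclideanSpace ℝ (Fin n)) : ℝ :=
  (1 / 2) * Real.log ((1 + Metric.diam D * dist x y / etaD D x) *
    (1 + Metric.diam D * dist x y / etaD D y))

/-- The length of a C¹ path with respect to the density `diam D / η`. -/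
noncomputable def mLength {n : ℕ} (D : Set (EuclideanSpace ℝ (Fin n)))
    (γ : ℝ → EuclideanSpace ℝ (Fin n)) : ℝ :=
  ∫ t in (0:ℝ)..1, (Metric.diam D / etaD D (γ t)) * ‖deriv γ t‖

/-- The infimal path-length metric `m_D` with density `diam D / η(z)`. -/
noncomputable def mDist {n : ℕ} (D : Set (EuclideanSpace ℝ (Fin n)))
    (x y : EuclideanSpace ℝ (Fin n)) : ℝ :=
  sInf { L : ℝ | ∃ γ : ℝ → EuclideanSpace ℝ (Fin n),
    ContDiffOn ℝ 1 γ (Set.Icc 0 1) ∧ γ 0 = x ∧ γ 1 = y ∧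
    (∀ t ∈ Set.Icc (0:ℝ) 1, γ t ∈ D) ∧ L = mLength D γ }

section Aux
variable {n : ℕ}

theorem deltaD_pos {D : Set (EuclideanSpace ℝ (Fin n))} (hopen : IsOpen D) (hne : D.Nonempty)
    (hproper : D ≠ Set.univ) {z : EuclideanSpace ℝ (Fin n)} (hz : z ∈ D) : 0 < deltaD D z := by
  rw [deltaD, ← (IsClosed.notMem_iff_infDist_pos isClosed_frontier
    (nonempty_frontier_iff.2 ⟨hne, hproper⟩))]
  intro h
  exact h.2 (by rwa [hopen.interior_eq])

theorem deltaD_nonneg (D : Set (EuclideanSpace ℝ (Fin n))) (z : EuclideanSpace ℝ (Fin n)) :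
    0 ≤ deltaD D z := Metric.infDist_nonneg

theorem ball_deltaD_subset {D : Set (EuclideanSpace ℝ (Fin n))} (hopen : IsOpen D)
    (hne : D.Nonempty) (hproper : D ≠ Set.univ)
    {z : EuclideanSpace ℝ (Fin n)} (hz : z ∈ D) :
    Metric.ball z (deltaD D z) ⊆ D := by
  intro w hw
  by_contra hwD
  have hball : ∀ u ∈ Metric.ball z (deltaD D z), u ∉ frontier D := by
    intro u hu hfu
    exact absurd (Metric.infDist_le_dist_of_mem hfu) (by rw [dist_comm]; exact not_le.2 hu)
  have hwcl : w ∉ closure D := by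
    intro hwcl
    exact hball w hw ⟨hwcl, fun h => hwD (hopen.interior_eq ▸ h)⟩
  have hseg : segment ℝ z w ⊆ Metric.ball z (deltaD D z) :=
    (convex_ball z _).segment_subset (Metric.mem_ball_self (deltaD_pos hopen hne hproper hz)) hw
  have hpre : IsPreconnected (segment ℝ z w) := (convex_segment z w).isPreconnected
  obtain ⟨u, _, huD, hucl⟩ := hpre D (closure D)ᶜ hopen (isClosed_closure.isOpen_compl)
    (fun u hu => by
      rcases Classical.em (u ∈ D) with h | h
      · exact Or.inl h
      · rcases Classical.em (u ∈ closure D) with h2 | h2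
        · exact absurd ⟨h2, fun h3 => h (by rwa [hopen.interior_eq] at h3)⟩ (hball u (hseg hu))
        · exact Or.inr h2)
    ⟨z, left_mem_segment ℝ z w, hz⟩ ⟨w, right_mem_segment ℝ z w, hwcl⟩
  exact hucl (subset_closure huD)

theorem two_deltaD_le (hn : 2 ≤ n) {D : Set (EuclideanSpace ℝ (Fin n))} (hopen : IsOpen D)
    (hne : D.Nonempty) (hproper : D ≠ Set.univ) (hbdd : Bornology.IsBounded D)
    {z : EuclideanSpace ℝ (Fin n)} (hz : z ∈ D) :
    2 * deltaD D z ≤ Metric.diam D := by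
  set v : EuclideanSpace ℝ (Fin n) := EuclideanSpace.single (⟨0, by omega⟩ : Fin n) (1:ℝ) with hv
  have hnv : ‖v‖ = 1 := by simp [hv, EuclideanSpace.norm_single]
  by_contra hcon
  push_neg at hcon
  obtain ⟨r, hr1, hr2⟩ := exists_between (div_lt_iff₀ (by norm_num : (0:ℝ) < 2) |>.2
    (by linarith : Metric.diam D < deltaD D z * 2))
  have hr0 : 0 ≤ r := le_trans (div_nonneg Metric.diam_nonneg (by norm_num)) hr1.le
  have h1 : z + r • v ∈ D := by
    apply ball_deltaD_subset hopen hne hproper hz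
    simp only [Metric.mem_ball, dist_eq_norm, add_sub_cancel_left, norm_smul, hnv,
      Real.norm_eq_abs, abs_of_nonneg hr0, mul_one]
    exact hr2
  have h2 : z - r • v ∈ D := by
    apply ball_deltaD_subset hopen hne hproper hz
    simp only [Metric.mem_ball, dist_eq_norm, sub_sub_cancel_left, norm_neg, norm_smul, hnv,
      Real.norm_eq_abs, abs_of_nonneg hr0, mul_one]
    exact hr2
  have h3 : dist (z + r • v) (z - r • v) ≤ Metric.diam D := Metric.dist_le_diam_of_mem hbdd h1 h2
  rw [dist_eq_norm] at h3
  have : z + r • v - (z - r • v) = (2*r) • v := by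
    rw [two_mul, add_smul]; abel
  rw [this, norm_smul, Real.norm_eq_abs, hnv, mul_one, abs_of_nonneg (by linarith)] at h3
  linarith

theorem etaD_pos (hn : 2 ≤ n) {D : Set (EuclideanSpace ℝ (Fin n))} (hopen : IsOpen D)
    (hne : D.Nonempty) (hproper : D ≠ Set.univ) (hbdd : Bornology.IsBounded D)
    {z : EuclideanSpace ℝ (Fin n)} (hz : z ∈ D) : 0 < etaD D z := by
  have h1 := deltaD_pos hopen hne hproper hz
  have h2 := two_deltaD_le hn hopen hne hproper hbdd hz
  exact mul_pos h1 (by linarith)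

theorem etaD_lip (hn : 2 ≤ n) {D : Set (EuclideanSpace ℝ (Fin n))} (hopen : IsOpen D)
    (hne : D.Nonempty) (hproper : D ≠ Set.univ) (hbdd : Bornology.IsBounded D)
    {z w : EuclideanSpace ℝ (Fin n)} (hz : z ∈ D) (hw : w ∈ D) :
    etaD D z ≤ etaD D w + Metric.diam D * dist z w := by
  have h1 := deltaD_pos hopen hne hproper hz
  have h2 := two_deltaD_le hn hopen hne hproper hbdd hz
  have h3 := deltaD_pos hopen hne hproper hw
  have h4 := two_deltaD_le hn hopen hne hproper hbdd hw
  have h5 : deltaD D z ≤ deltaD D w + dist z w := Metric.infDist_le_infDist_add_dist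
  have h6 : deltaD D w ≤ deltaD D z + dist w z := Metric.infDist_le_infDist_add_dist
  rw [dist_comm w z] at h6
  rw [etaD, etaD]
  nlinarith [dist_nonneg (x := z) (y := w)]

theorem diamD_pos (hn : 2 ≤ n) {D : Set (EuclideanSpace ℝ (Fin n))} (hopen : IsOpen D)
    (hne : D.Nonempty) (hproper : D ≠ Set.univ) (hbdd : Bornology.IsBounded D)
    {z : EuclideanSpace ℝ (Fin n)} (hz : z ∈ D) : 0 < Metric.diam D := by
  have h1 := deltaD_pos hopen hne hproper hz
  have h2 := two_deltaD_le hn hopen hne hproper hbdd hz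
  linarith

theorem core (hn : 2 ≤ n) {D : Set (EuclideanSpace ℝ (Fin n))} (hopen : IsOpen D)
    (hne : D.Nonempty) (hproper : D ≠ Set.univ) (hbdd : Bornology.IsBounded D)
    {γ : ℝ → EuclideanSpace ℝ (Fin n)} (hγ : ContDiffOn ℝ 1 γ (Set.Icc 0 1))
    (hmem : ∀ t ∈ Set.Icc (0:ℝ) 1, γ t ∈ D) :
    Real.log (1 + Metric.diam D * dist (γ 0) (γ 1) / etaD D (γ 0)) ≤ mLength D γ ∧
    Real.log (1 + Metric.diam D * dist (γ 0) (γ 1) / etaD D (γ 1)) ≤ mLength D γ := by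
  have h01 : (0:ℝ) ≤ 1 := zero_le_one
  set d := Metric.diam D with hd
  have hd0 : 0 < d := diamD_pos hn hopen hne hproper hbdd (hmem 0 (by norm_num))
  -- the continuous derivative within Icc
  set gv : ℝ → EuclideanSpace ℝ (Fin n) := derivWithin γ (Set.Icc 0 1) with hgv
  have hgvc : ContinuousOn gv (Set.Icc 0 1) :=
    hγ.continuousOn_derivWithin (uniqueDiffOn_Icc zero_lt_one) le_rfl
  set g : ℝ → ℝ := fun t => ‖gv t‖ with hg
  have hgc : ContinuousOn g (Set.Icc 0 1) := hgvc.norm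
  have hg0 : ∀ t, 0 ≤ g t := fun t => norm_nonneg _
  -- derivative facts
  have hder : ∀ t ∈ Set.Ioo (0:ℝ) 1, HasDerivAt γ (gv t) t := by
    intro t ht
    have hnh : Set.Icc (0:ℝ) 1 ∈ nhds t := Icc_mem_nhds ht.1 ht.2
    have hdiff := (hγ.differentiableOn one_ne_zero) t (Set.Ioo_subset_Icc_self ht)
    have := (hdiff.differentiableAt hnh).hasDerivAt
    rwa [hgv, derivWithin_of_mem_nhds hnh]
  have hderiv_eq : ∀ t ∈ Set.Ioo (0:ℝ) 1, deriv γ t = gv t := by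
    intro t ht
    exact (derivWithin_of_mem_nhds (Icc_mem_nhds ht.1 ht.2)).symm
  -- arc length function
  set s : ℝ → ℝ := fun t => ∫ u in (0:ℝ)..t, g u with hs
  have hgint : IntegrableOn g (Set.Icc 0 1) volume := hgc.integrableOn_Icc
  have hgii : ∀ a b : ℝ, a ∈ Set.Icc (0:ℝ) 1 → b ∈ Set.Icc (0:ℝ) 1 →
      IntervalIntegrable g volume a b := by
    intro a b ha hb
    exact (hgint.mono_set (Set.uIcc_subset_Icc ha hb)).intervalIntegrable
  have hscont : ContinuousOn s (Set.Icc 0 1) := by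
    have := continuousOn_primitive_interval (f := g) (a := (0:ℝ)) (b := 1) (μ := volume)
      (by rwa [Set.uIcc_of_le h01])
    rwa [Set.uIcc_of_le h01] at this
  have hsderiv : ∀ t ∈ Set.Ioo (0:ℝ) 1, HasDerivAt s (g t) t := by
    intro t ht
    have ht' : t ∈ Set.Icc (0:ℝ) 1 := Set.Ioo_subset_Icc_self ht
    exact integral_hasDerivAt_right (hgii 0 t (by norm_num) ht')
      (ContinuousOn.stronglyMeasurableAtFilter isOpen_Ioo
        (hgc.mono Set.Ioo_subset_Icc_self) t ht)
      (hgc.continuousAt (Icc_mem_nhds ht.1 ht.2))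
  -- s is nonnegative and bounded by s 1 on [0,1]; arc-length bounds
  have hs_nonneg : ∀ t ∈ Set.Icc (0:ℝ) 1, 0 ≤ s t := by
    intro t ht
    exact intervalIntegral.integral_nonneg ht.1 (fun u _ => hg0 u)
  have hs_split : ∀ t ∈ Set.Icc (0:ℝ) 1, s t + ∫ u in t..1, g u = s 1 := by
    intro t ht
    exact integral_add_adjacent_intervals (hgii 0 t (by norm_num) ht)
      (hgii t 1 ht (by norm_num))
  have htail_nonneg : ∀ t ∈ Set.Icc (0:ℝ) 1, 0 ≤ s 1 - s t := by
    intro t ht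
    rw [← hs_split t ht]
    simp only [add_sub_cancel_left]
    exact intervalIntegral.integral_nonneg ht.2 (fun u _ => hg0 u)
  -- FTC for γ on subintervals
  have hftc : ∀ a b : ℝ, a ∈ Set.Icc (0:ℝ) 1 → b ∈ Set.Icc (0:ℝ) 1 → a ≤ b →
      dist (γ a) (γ b) ≤ ∫ u in a..b, g u := by
    intro a b ha hb hab
    have hsub : Set.Icc a b ⊆ Set.Icc (0:ℝ) 1 := Set.Icc_subset_Icc ha.1 hb.2
    have heq : ∫ u in a..b, gv u = γ b - γ a := by
      apply integral_eq_sub_of_hasDeriv_right_of_le hab (hγ.continuousOn.mono hsub)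
      · intro t ht
        exact (hder t (Set.Ioo_subset_Ioo ha.1 hb.2 ht)).hasDerivWithinAt
      · exact ((hgvc.mono (Set.uIcc_subset_Icc ha hb)).mono
          (by rw [Set.uIcc_of_le hab])).intervalIntegrable
    rw [dist_eq_norm, norm_sub_rev, ← heq]
    exact intervalIntegral.norm_integral_le_integral_norm hab
  have harc0 : ∀ t ∈ Set.Icc (0:ℝ) 1, dist (γ 0) (γ t) ≤ s t := fun t ht =>
    hftc 0 t (by norm_num) ht ht.1
  have harc1 : ∀ t ∈ Set.Icc (0:ℝ) 1, dist (γ t) (γ 1) ≤ s 1 - s t := by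
    intro t ht
    have := hftc t 1 ht (by norm_num) ht.2
    rwa [show (∫ u in t..1, g u) = s 1 - s t by rw [← hs_split t ht]; ring] at this
  -- the continuous version of the integrand
  set fc : ℝ → ℝ := fun t => (d / etaD D (γ t)) * g t with hfc
  have hetacont : ContinuousOn (fun t => etaD D (γ t)) (Set.Icc 0 1) := by
    apply ContinuousOn.mul
    · exact (Metric.continuous_infDist_pt (frontier D)).comp_continuousOn hγ.continuousOn
    · exact continuousOn_const.sub
        ((Metric.continuous_infDist_pt (frontier D)).comp_continuousOn hγ.continuousOn)
  have hetapos : ∀ t ∈ Set.Icc (0:ℝ) 1, 0 < etaD D (γ t) := fun t ht => etaD_pos hn hopen hne hproper hbdd (hmem t ht)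
  have hfccont : ContinuousOn fc (Set.Icc 0 1) :=
    ((continuousOn_const.div hetacont (fun t ht => (hetapos t ht).ne')).mul hgc)
  have hfcint : IntervalIntegrable fc volume 0 1 :=
    (hfccont.mono (by rw [Set.uIcc_of_le h01])).intervalIntegrable
  -- mLength equals the integral of fc
  have hml : mLength D γ = ∫ t in (0:ℝ)..1, fc t := by
    apply intervalIntegral.integral_congr_ae
    have h1 : ∀ᵐ u ∂volume, u ≠ (1:ℝ) :=
      ae_iff.2 (by simpa using measure_singleton (1:ℝ))
    have h0 : ∀ᵐ u ∂volume, u ≠ (0:ℝ) :=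
      ae_iff.2 (by simpa using measure_singleton (0:ℝ))
    filter_upwards [h1] with u hu1 hu
    rw [Set.uIoc_of_le h01] at hu
    have huIoo : u ∈ Set.Ioo (0:ℝ) 1 := ⟨hu.1, lt_of_le_of_ne hu.2 hu1⟩
    rw [hfc]
    simp only
    rw [hderiv_eq u huIoo]
  -- common endpoints
  have h0mem : (0:ℝ) ∈ Set.Icc (0:ℝ) 1 := by norm_num
  have h1mem : (1:ℝ) ∈ Set.Icc (0:ℝ) 1 := by norm_num
  have hs0 : s 0 = 0 := intervalIntegral.integral_same
  have hdist_le : dist (γ 0) (γ 1) ≤ s 1 := harc0 1 h1mem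
  have hdistnn : (0:ℝ) ≤ dist (γ 0) (γ 1) := dist_nonneg
  have hs1nn : 0 ≤ s 1 := hs_nonneg 1 h1mem
  constructor
  · -- bound via etaD D (γ 0)
    set a := etaD D (γ 0) with ha
    have ha0 : 0 < a := hetapos 0 h0mem
    have hinner : ∀ t ∈ Set.Icc (0:ℝ) 1, 0 < a + d * s t := fun t ht =>
      add_pos_of_pos_of_nonneg ha0 (mul_nonneg hd0.le (hs_nonneg t ht))
    set G' : ℝ → ℝ := fun t => d * g t / (a + d * s t) with hG'
    have hGderiv : ∀ t ∈ Set.Ioo (0:ℝ) 1,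
        HasDerivWithinAt (fun u => Real.log (a + d * s u)) (G' t) (Set.Ioi t) t := by
      intro t ht
      exact ((((hsderiv t ht).const_mul d).const_add a).log
        (hinner t (Set.Ioo_subset_Icc_self ht)).ne').hasDerivWithinAt
    have hGcont : ContinuousOn (fun u => Real.log (a + d * s u)) (Set.Icc 0 1) :=
      (continuousOn_const.add (continuousOn_const.mul hscont)).log
        (fun t ht => (hinner t ht).ne')
    have hG'cont : ContinuousOn G' (Set.Icc 0 1) :=
      (continuousOn_const.mul hgc).div
        (continuousOn_const.add (continuousOn_const.mul hscont))
        (fun t ht => (hinner t ht).ne')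
    have hG'int : IntervalIntegrable G' volume 0 1 :=
      (hG'cont.mono (by rw [Set.uIcc_of_le h01])).intervalIntegrable
    have hGftc : ∫ t in (0:ℝ)..1, G' t
        = Real.log (a + d * s 1) - Real.log (a + d * s 0) :=
      integral_eq_sub_of_hasDeriv_right_of_le h01 hGcont hGderiv hG'int
    have hcmp : ∀ t ∈ Set.Icc (0:ℝ) 1, G' t ≤ fc t := by
      intro t ht
      have hη : etaD D (γ t) ≤ a + d * s t := by
        have h5 := etaD_lip hn hopen hne hproper hbdd (hmem t ht) (hmem 0 h0mem)
        have h6 := harc0 t ht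
        rw [dist_comm] at h6
        nlinarith
      have : fc t = d * g t / etaD D (γ t) := by rw [hfc]; ring
      rw [this, hG']
      beta_reduce
      rcases (hg0 t).eq_or_lt with h | h
      · simp [← h]
      · exact ((div_le_div_iff_of_pos_left (mul_pos hd0 h) (hinner t ht) (hetapos t ht)).2 hη)
    have hle : ∫ t in (0:ℝ)..1, G' t ≤ ∫ t in (0:ℝ)..1, fc t :=
      intervalIntegral.integral_mono_on h01 hG'int hfcint hcmp
    rw [hml]
    refine le_trans ?_ hle
    rw [hGftc, hs0, mul_zero, add_zero,
      ← Real.log_div (by positivity) ha0.ne']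
    apply Real.log_le_log (by positivity)
    have hrw : (a + d * s 1) / a = 1 + d * s 1 / a := by field_simp
    rw [hrw]
    have h2 := (div_le_div_iff_of_pos_right ha0).2
      (mul_le_mul_of_nonneg_left hdist_le hd0.le)
    linarith
  · -- bound via etaD D (γ 1)
    set b := etaD D (γ 1) with hb
    have hb0 : 0 < b := hetapos 1 h1mem
    have hinner : ∀ t ∈ Set.Icc (0:ℝ) 1, 0 < b + d * (s 1 - s t) := fun t ht =>
      add_pos_of_pos_of_nonneg hb0 (mul_nonneg hd0.le (htail_nonneg t ht))
    set H' : ℝ → ℝ := fun t => d * g t / (b + d * (s 1 - s t)) with hH'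
    have hHderiv : ∀ t ∈ Set.Ioo (0:ℝ) 1,
        HasDerivWithinAt (fun u => -Real.log (b + d * (s 1 - s u))) (H' t) (Set.Ioi t) t := by
      intro t ht
      have h1 : HasDerivAt (fun u => b + d * (s 1 - s u)) (d * -g t) t :=
        (((hsderiv t ht).const_sub (s 1)).const_mul d).const_add b
      have h2 := (h1.log (hinner t (Set.Ioo_subset_Icc_self ht)).ne').neg
      have h3 : -(d * -g t / (b + d * (s 1 - s t))) = H' t := by rw [hH']; ring
      rw [h3] at h2
      exact h2.hasDerivWithinAt
    have hHcont : ContinuousOn (fun u => -Real.log (b + d * (s 1 - s u))) (Set.Icc 0 1) :=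
      ((continuousOn_const.add (continuousOn_const.mul
        (continuousOn_const.sub hscont))).log (fun t ht => (hinner t ht).ne')).neg
    have hH'cont : ContinuousOn H' (Set.Icc 0 1) :=
      (continuousOn_const.mul hgc).div
        (continuousOn_const.add (continuousOn_const.mul (continuousOn_const.sub hscont)))
        (fun t ht => (hinner t ht).ne')
    have hH'int : IntervalIntegrable H' volume 0 1 :=
      (hH'cont.mono (by rw [Set.uIcc_of_le h01])).intervalIntegrable
    have hHftc : ∫ t in (0:ℝ)..1, H' t
        = -Real.log (b + d * (s 1 - s 1)) - -Real.log (b + d * (s 1 - s 0)) :=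
      integral_eq_sub_of_hasDeriv_right_of_le h01 hHcont hHderiv hH'int
    have hcmp : ∀ t ∈ Set.Icc (0:ℝ) 1, H' t ≤ fc t := by
      intro t ht
      have hη : etaD D (γ t) ≤ b + d * (s 1 - s t) := by
        have h5 := etaD_lip hn hopen hne hproper hbdd (hmem t ht) (hmem 1 h1mem)
        have h6 := harc1 t ht
        nlinarith
      have : fc t = d * g t / etaD D (γ t) := by rw [hfc]; ring
      rw [this, hH']
      beta_reduce
      rcases (hg0 t).eq_or_lt with h | h
      · simp [← h]
      · exact ((div_le_div_iff_of_pos_left (mul_pos hd0 h) (hinner t ht) (hetapos t ht)).2 hη)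
    have hle : ∫ t in (0:ℝ)..1, H' t ≤ ∫ t in (0:ℝ)..1, fc t :=
      intervalIntegral.integral_mono_on h01 hH'int hfcint hcmp
    rw [hml]
    refine le_trans ?_ hle
    rw [hHftc, hs0, sub_zero, sub_self, mul_zero, add_zero]
    rw [show -Real.log b - -Real.log (b + d * s 1)
      = Real.log (b + d * s 1) - Real.log b by ring,
      ← Real.log_div (by positivity) hb0.ne']
    apply Real.log_le_log (by positivity)
    have hrw : (b + d * s 1) / b = 1 + d * s 1 / b := by field_simp
    rw [hrw]
    have h2 := (div_le_div_iff_of_pos_right hb0).2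
      (mul_le_mul_of_nonneg_left hdist_le hd0.le)
    linarith



theorem exists_smooth_path {D : Set (EuclideanSpace ℝ (Fin n))} (hopen : IsOpen D)
    (hconn : IsConnected D) {x y : EuclideanSpace ℝ (Fin n)} (hx : x ∈ D) (hy : y ∈ D) :
    ∃ γ : ℝ → EuclideanSpace ℝ (Fin n), ContDiffOn ℝ 1 γ (Set.Icc 0 1) ∧ γ 0 = x ∧ γ 1 = y ∧
      ∀ t ∈ Set.Icc (0:ℝ) 1, γ t ∈ D := by
  have hpc : IsPathConnected D := (hopen.isConnected_iff_isPathConnected).1 hconn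
  have hj : JoinedIn D x y := hpc.joinedIn x hx y hy
  set p : Path x y := hj.somePath with hp
  have hpD : ∀ t, p t ∈ D := hj.somePath_mem
  set K : Set (EuclideanSpace ℝ (Fin n)) := Set.range p with hK
  have hKc : IsCompact K := isCompact_range p.continuous
  have hKD : K ⊆ D := Set.range_subset_iff.2 hpD
  obtain ⟨ε, hε, hthick⟩ := hKc.exists_cthickening_subset_open hopen hKD
  have hucp : UniformContinuous p := CompactSpace.uniformContinuous_of_continuous p.continuous
  obtain ⟨δ, hδ, hδp⟩ := Metric.uniformContinuous_iff.1 hucp ε hε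
  obtain ⟨m, hm⟩ := exists_nat_one_div_lt hδ
  set k : ℕ := m + 1 with hkdef
  have hk0 : 0 < (k:ℝ) := by positivity
  set xp : ℕ → EuclideanSpace ℝ (Fin n) := fun i => p.extend (i / k) with hxp
  have hxpK : ∀ i, xp i ∈ K := fun i => ⟨_, rfl⟩
  have hkm : 1/(k:ℝ) < δ := by rw [hkdef]; push_cast; exact hm
  have hproj : ∀ i : ℕ, xp i = p (Set.projIcc 0 1 zero_le_one ((i:ℝ) / k)) := fun i => rfl
  have hstep : ∀ i : ℕ, i < k → dist (xp (i+1)) (xp i) ≤ ε := by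
    intro i hik
    rw [hproj, hproj]
    apply le_of_lt
    apply hδp
    have hmem1 : ((i+1:ℕ):ℝ)/k ∈ Set.Icc (0:ℝ) 1 := ⟨by positivity, by
      rw [div_le_one hk0]; exact_mod_cast Nat.succ_le_of_lt hik⟩
    have hmem0 : ((i:ℕ):ℝ)/k ∈ Set.Icc (0:ℝ) 1 := ⟨by positivity, by
      rw [div_le_one hk0]; exact_mod_cast (le_of_lt hik)⟩
    rw [Subtype.dist_eq, Set.projIcc_of_mem _ hmem1, Set.projIcc_of_mem _ hmem0]
    simp only
    rw [Real.dist_eq, div_sub_div_same]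
    push_cast
    rw [show (i:ℝ)+1-i = 1 by ring, abs_of_pos (by positivity)]
    exact_mod_cast hm
  set φ : ℝ → ℝ := Real.smoothTransition with hφ
  set γ : ℝ → EuclideanSpace ℝ (Fin n) := fun t =>
    xp 0 + ∑ i ∈ Finset.range k, φ ((k:ℝ) * t - i) • (xp (i+1) - xp i) with hγdef
  have hsmooth : ContDiff ℝ 1 γ := by
    apply contDiff_const.add
    apply ContDiff.sum
    intro i _
    exact (Real.smoothTransition.contDiff.comp
      ((contDiff_const.mul contDiff_id).sub contDiff_const)).smul contDiff_const
  have hγ0 : γ 0 = x := by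
    rw [hγdef]
    simp only
    rw [Finset.sum_eq_zero, add_zero]
    · rw [hxp]
      simp only [Nat.cast_zero, zero_div, Path.extend_zero]
    · intro i _
      rw [hφ, mul_zero, zero_sub,
        Real.smoothTransition.zero_of_nonpos (neg_nonpos.2 (Nat.cast_nonneg i)), zero_smul]
  have hγ1 : γ 1 = y := by
    rw [hγdef]
    simp only
    have : ∀ i ∈ Finset.range k, φ ((k:ℝ) * 1 - i) • (xp (i+1) - xp i) = xp (i+1) - xp i := by
      intro i hi
      rw [hφ, Real.smoothTransition.one_of_one_le, one_smul]
      rw [mul_one, le_sub_iff_add_le]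
      have : (i:ℝ) + 1 ≤ k := by exact_mod_cast Nat.succ_le_of_lt (Finset.mem_range.1 hi)
      linarith
    rw [Finset.sum_congr rfl this, Finset.sum_range_sub]
    rw [hxp]
    simp only [add_sub_cancel]
    rw [div_self hk0.ne', Path.extend_one]
  have hγmem : ∀ t ∈ Set.Icc (0:ℝ) 1, γ t ∈ D := by
    intro t ht
    -- find the subinterval index
    obtain ⟨i, hik, hit0, hit1⟩ : ∃ i : ℕ, i < k ∧ (i:ℝ)/k ≤ t ∧ t ≤ ((i:ℝ)+1)/k := by
      rcases eq_or_lt_of_le ht.2 with h1 | h1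
      · subst h1
        refine ⟨k - 1, Nat.sub_lt (by omega) one_pos, ?_, ?_⟩
        · rw [div_le_one hk0]
          exact_mod_cast Nat.sub_le k 1
        · rw [le_div_iff₀ hk0, one_mul, Nat.cast_sub (by omega : 1 ≤ k)]
          push_cast
          linarith
      · refine ⟨⌊(k:ℝ) * t⌋₊, ?_, ?_, ?_⟩
        · rw [Nat.floor_lt (mul_nonneg hk0.le ht.1)]
          calc (k:ℝ) * t < (k:ℝ) * 1 := by
                exact mul_lt_mul_of_pos_left h1 hk0
            _ = k := by ring
        · rw [div_le_iff₀ hk0, mul_comm]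
          exact Nat.floor_le (mul_nonneg ht.1 hk0.le)
        · rw [le_div_iff₀ hk0, mul_comm]
          exact le_of_lt (Nat.lt_floor_add_one _)
    -- collapse the sum
    have hval : γ t = xp i + φ ((k:ℝ) * t - i) • (xp (i+1) - xp i) := by
      rw [hγdef]
      simp only
      have hsplit1 : (Finset.range k) = Finset.Ico 0 k := by rw [Finset.range_eq_Ico]
      have hle1 : i + 1 ≤ k := Nat.succ_le_of_lt hik
      have e1 : (∑ j ∈ Finset.Ico 0 (i+1), φ ((k:ℝ) * t - j) • (xp (j+1) - xp j))
          + ∑ j ∈ Finset.Ico (i+1) k, φ ((k:ℝ) * t - j) • (xp (j+1) - xp j)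
          = ∑ j ∈ Finset.Ico 0 k, φ ((k:ℝ) * t - j) • (xp (j+1) - xp j) :=
        Finset.sum_Ico_consecutive _ (Nat.zero_le _) hle1
      have e2 : ∑ j ∈ Finset.Ico (i+1) k, φ ((k:ℝ) * t - j) • (xp (j+1) - xp j) = 0 := by
        apply Finset.sum_eq_zero
        intro j hj
        have hji : (i:ℝ) + 1 ≤ (j:ℝ) := by exact_mod_cast (Finset.mem_Ico.1 hj).1
        have h7 : t * k ≤ (i:ℝ) + 1 := (le_div_iff₀ hk0).1 hit1
        have h8 : (k:ℝ) * t = t * k := mul_comm _ _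
        rw [hφ, Real.smoothTransition.zero_of_nonpos (by linarith), zero_smul]
      have e3 : ∀ j ∈ Finset.range i, φ ((k:ℝ) * t - j) • (xp (j+1) - xp j) = xp (j+1) - xp j := by
        intro j hj
        have hji : (j:ℝ) + 1 ≤ (i:ℝ) := by exact_mod_cast Nat.succ_le_of_lt (Finset.mem_range.1 hj)
        have h7 : (i:ℝ) ≤ t * k := (div_le_iff₀ hk0).1 hit0
        have h8 : (k:ℝ) * t = t * k := mul_comm _ _
        rw [hφ, Real.smoothTransition.one_of_one_le (by linarith), one_smul]
      rw [hsplit1, ← e1, e2, add_zero, ← Finset.range_eq_Ico, Finset.sum_range_succ,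
        Finset.sum_congr rfl e3, Finset.sum_range_sub]
      abel
    have hdist : dist (γ t) (xp i) ≤ ε := by
      rw [hval, dist_eq_norm, add_sub_cancel_left, norm_smul, Real.norm_eq_abs,
        abs_of_nonneg (Real.smoothTransition.nonneg _)]
      calc φ ((k:ℝ)*t - i) * ‖xp (i+1) - xp i‖ ≤ 1 * ‖xp (i+1) - xp i‖ :=
            mul_le_mul_of_nonneg_right (Real.smoothTransition.le_one _) (norm_nonneg _)
        _ = dist (xp (i+1)) (xp i) := by rw [one_mul, dist_eq_norm]
        _ ≤ ε := hstep i hik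
    exact hthick (Metric.mem_cthickening_of_dist_le _ _ _ _ (hxpK i) hdist)
  exact ⟨γ, hsmooth.contDiffOn, hγ0, hγ1, hγmem⟩

end Aux

theorem stmt_16 {n : ℕ} (hn : 2 ≤ n) (D : Set (EuclideanSpace ℝ (Fin n)))
    (hopen : IsOpen D) (hconn : IsConnected D) (hproper : D ≠ Set.univ)
    (hbdd : Bornology.IsBounded D)
    (x y : EuclideanSpace ℝ (Fin n)) (hx : x ∈ D) (hy : y ∈ D) :
    zetaD D x y ≤ mDist D x y := by
  have hne : D.Nonempty := ⟨x, hx⟩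
  apply le_csInf
  · obtain ⟨γ, h1, h2, h3, h4⟩ := exists_smooth_path hopen hconn hx hy
    exact ⟨mLength D γ, γ, h1, h2, h3, h4, rfl⟩
  · rintro L ⟨γ, h1, h2, h3, h4, rfl⟩
    obtain ⟨c1, c2⟩ := core hn hopen hne hproper hbdd h1 h4
    rw [h2, h3] at c1 c2
    rw [zetaD]
    rcases min_cases (etaD D x) (etaD D y) with ⟨hmin, _⟩ | ⟨hmin, _⟩ <;> rw [hmin]
    · exact c1
    · exact c2
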